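/- Let A, B ⊆ ℝ^d be finite sets with B proper d-dimensional and A ⊆ conv B, and let k be a positive integer. Suppose S_1 = conv B_1, …, S_n = conv B_n is a simplicial decomposition of conv B as in the decomposition lemma (each B_i ⊆ B affinely independent with |B_i| = d+1, S_i ∩ B = B_i, the simplices pairwise in regular position, and ⋃ S_i = conv B). Define A_1 = A ∩ S_1 and A_i = A ∩ (S_i \ (S_1 ∪ ⋯ ∪ S_{i−1})) for i ≥ 2. Then the sets A_i + kB_i, for 1 ≤ i ≤ n, are pairwise disjoint; consequently |A + kB| ≥ Σ_{i=1}^n |A_i + kB_i|. -/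
import Mathlib


open Pointwise

/-- The `k`-fold sumset `B + B + ⋯ + B` (`k` summands). -/
def kfoldSumset {α : Type*} [AddCommMonoid α] [DecidableEq α]
    (k : ℕ) (B : Finset α) : Finset α :=
  ∑ _i ∈ Finset.range k, B

lemma kfold_succ {α : Type*} [AddCommMonoid α] [DecidableEq α] (m : ℕ) (s : Finset α) :
    kfoldSumset (m+1) s = kfoldSumset m s + s :=
  Finset.sum_range_succ (fun _ => s) m

lemma mem_convexHull_finset_iff {d : ℕ} (s : Finset (Fin d → ℝ)) (x : Fin d → ℝ) :
    x ∈ convexHull ℝ (s : Set (Fin d → ℝ)) ↔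
      ∃ w : (Fin d → ℝ) → ℝ, (∀ y ∈ s, 0 ≤ w y) ∧ ∑ y ∈ s, w y = 1 ∧
        ∑ y ∈ s, w y • y = x := by
  rw [Finset.convexHull_eq]
  constructor
  · rintro ⟨w, h0, h1, h2⟩
    exact ⟨w, h0, h1, by rwa [Finset.centerMass_eq_of_sum_1 _ _ h1] at h2⟩
  · rintro ⟨w, h0, h1, h2⟩
    exact ⟨w, h0, h1, by rwa [Finset.centerMass_eq_of_sum_1 _ _ h1]⟩

lemma kfold_weights {d : ℕ} (k : ℕ) (s : Finset (Fin d → ℝ)) (x : Fin d → ℝ)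
    (hx : x ∈ kfoldSumset k s) :
    ∃ w : (Fin d → ℝ) → ℝ, (∀ y ∈ s, 0 ≤ w y) ∧ ∑ y ∈ s, w y = k ∧
      ∑ y ∈ s, w y • y = x := by
  induction k generalizing x with
  | zero =>
      have h0 : kfoldSumset 0 s = 0 := Finset.sum_range_zero _
      rw [h0, Finset.mem_zero] at hx
      subst hx
      exact ⟨0, by simp, by simp, by simp⟩
  | succ m ih =>
      rw [kfold_succ, Finset.mem_add] at hx
      obtain ⟨u, hu, b, hb, rfl⟩ := hx
      obtain ⟨w, hw0, hw1, hw2⟩ := ih u hu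
      classical
      refine ⟨fun y => w y + if y = b then 1 else 0, ?_, ?_, ?_⟩
      · intro y hy
        have := hw0 y hy
        positivity
      · rw [Finset.sum_add_distrib, hw1, Finset.sum_ite_eq' s b (fun _ => (1:ℝ))]
        simp only [hb, if_true]
        push_cast; ring
      · simp only [add_smul, Finset.sum_add_distrib, hw2]
        congr 1
        rw [show (∑ y ∈ s, (if y = b then (1:ℝ) else 0) • y) =
          ∑ y ∈ s, (if y = b then b else 0) from by
            refine Finset.sum_congr rfl fun y hy => ?_
            split <;> simp_all]
        simp [Finset.sum_ite_eq' s b, hb]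

lemma kfold_mono {d : ℕ} (k : ℕ) {s t : Finset (Fin d → ℝ)} (h : s ⊆ t) :
    kfoldSumset k s ⊆ kfoldSumset k t := by
  induction k with
  | zero =>
      rw [show kfoldSumset 0 s = 0 from Finset.sum_range_zero _,
        show kfoldSumset 0 t = 0 from Finset.sum_range_zero _]
  | succ m ih =>
      rw [kfold_succ, kfold_succ]
      exact Finset.add_subset_add ih h

lemma unique_weights {d : ℕ} {s : Finset (Fin d → ℝ)}
    (h : AffineIndependent ℝ (fun p : ((s : Set (Fin d → ℝ))) => (p : Fin d → ℝ)))
    (w1 w2 : (Fin d → ℝ) → ℝ)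
    (hsum : ∑ y ∈ s, w1 y = ∑ y ∈ s, w2 y)
    (hcomb : ∑ y ∈ s, w1 y • y = ∑ y ∈ s, w2 y • y) :
    ∀ y ∈ s, w1 y = w2 y := by
  classical
  rw [affineIndependent_iff] at h
  have key := h Finset.univ (fun p => w1 p - w2 p) ?_ ?_
  · intro y hy
    have := key ⟨y, by simpa using hy⟩ (Finset.mem_univ _)
    simpa [sub_eq_zero] using this
  · rw [Finset.sum_set_coe (f := fun y => w1 y - w2 y), Finset.toFinset_coe]
    simp [Finset.sum_sub_distrib, hsum]
  · rw [Finset.sum_set_coe (f := fun y => (w1 y - w2 y) • y), Finset.toFinset_coe]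
    simp [sub_smul, Finset.sum_sub_distrib, hcomb]

lemma core_disjoint {d k n : ℕ}
    (A : Finset (Fin d → ℝ))
    (Bv : Fin n → Finset (Fin d → ℝ))
    (hindep : ∀ i, AffineIndependent ℝ
      (fun p : ((Bv i : Set (Fin d → ℝ))) => (p : Fin d → ℝ)))
    (hreg : ∀ i j, convexHull ℝ ((Bv i : Set (Fin d → ℝ)))
        ∩ convexHull ℝ ((Bv j : Set (Fin d → ℝ)))
      = convexHull ℝ ((Bv i ∩ Bv j : Finset (Fin d → ℝ)) : Set (Fin d → ℝ)))
    (AF : Fin n → Finset (Fin d → ℝ))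
    (hAF : ∀ i a, a ∈ AF i ↔ a ∈ A ∧ a ∈ convexHull ℝ ((Bv i : Set (Fin d → ℝ))) ∧
      ∀ j < i, a ∉ convexHull ℝ ((Bv j : Set (Fin d → ℝ))))
    {i j : Fin n} (hij : i < j) :
    Disjoint (AF i + kfoldSumset k (Bv i)) (AF j + kfoldSumset k (Bv j)) := by
  classical
  rw [Finset.disjoint_left]
  rintro x hxi hxj
  rw [Finset.mem_add] at hxi hxj
  obtain ⟨a, ha, sA, hsA, hx1⟩ := hxi
  obtain ⟨a', ha', sB, hsB, hx2⟩ := hxj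
  obtain ⟨wa, hwa0, hwa1, hwa2⟩ := (mem_convexHull_finset_iff _ _).1 ((hAF i a).1 ha).2.1
  obtain ⟨us, hus0, hus1, hus2⟩ := kfold_weights k _ _ hsA
  obtain ⟨wa', hwa'0, hwa'1, hwa'2⟩ := (mem_convexHull_finset_iff _ _).1 ((hAF j a').1 ha').2.1
  obtain ⟨us', hus'0, hus'1, hus'2⟩ := kfold_weights k _ _ hsB
  set c : ℝ := ((k : ℝ) + 1)⁻¹ with hc
  have hk1 : (0:ℝ) < (k:ℝ) + 1 := by positivity
  have hc0 : (0:ℝ) < c := by positivity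
  set p : Fin d → ℝ := c • x with hpdef
  have hpi : p ∈ convexHull ℝ ((Bv i : Set (Fin d → ℝ))) := by
    rw [mem_convexHull_finset_iff]
    refine ⟨fun y => c * (wa y + us y), ?_, ?_, ?_⟩
    · intro y hy
      have := hwa0 y hy; have := hus0 y hy
      positivity
    · rw [← Finset.mul_sum, Finset.sum_add_distrib, hwa1, hus1, hc]
      field_simp
      ring
    · have hWx : ∑ y ∈ Bv i, (wa y + us y) • y = x := by
        simp only [add_smul, Finset.sum_add_distrib, hwa2, hus2]; exact hx1
      simp_rw [mul_smul]
      rw [← Finset.smul_sum, hWx]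
  have hpj : p ∈ convexHull ℝ ((Bv j : Set (Fin d → ℝ))) := by
    rw [mem_convexHull_finset_iff]
    refine ⟨fun y => c * (wa' y + us' y), ?_, ?_, ?_⟩
    · intro y hy
      have := hwa'0 y hy; have := hus'0 y hy
      positivity
    · rw [← Finset.mul_sum, Finset.sum_add_distrib, hwa'1, hus'1, hc]
      field_simp
      ring
    · have hWx : ∑ y ∈ Bv j, (wa' y + us' y) • y = x := by
        simp only [add_smul, Finset.sum_add_distrib, hwa'2, hus'2]; exact hx2
      simp_rw [mul_smul]
      rw [← Finset.smul_sum, hWx]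
  have hpint : p ∈ convexHull ℝ ((Bv i ∩ Bv j : Finset (Fin d → ℝ)) : Set (Fin d → ℝ)) := by
    rw [← hreg i j]; exact ⟨hpi, hpj⟩
  obtain ⟨v, hv0, hv1, hv2⟩ := (mem_convexHull_finset_iff _ _).1 hpint
  set v' : (Fin d → ℝ) → ℝ := fun y => if y ∈ Bv i ∩ Bv j then v y else 0 with hv'def
  have hext : ∀ (f : (Fin d → ℝ) → ℝ),
      (∀ y ∈ Bv j, y ∉ Bv i ∩ Bv j → f y = 0) →
      ∑ y ∈ Bv i ∩ Bv j, f y = ∑ y ∈ Bv j, f y :=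
    fun f hf => Finset.sum_subset Finset.inter_subset_right hf
  have hv'1 : ∑ y ∈ Bv j, v' y = 1 := by
    rw [← Finset.sum_subset Finset.inter_subset_right
      (fun y _ hy => if_neg hy : ∀ y ∈ Bv j, y ∉ Bv i ∩ Bv j → v' y = 0)]
    rw [Finset.sum_congr rfl (fun y hy => if_pos hy)]
    exact hv1
  have hv'2 : ∑ y ∈ Bv j, v' y • y = p := by
    rw [← Finset.sum_subset Finset.inter_subset_right
      (fun y _ hy => by
        show (if y ∈ Bv i ∩ Bv j then v y else 0) • y = 0
        rw [if_neg hy, zero_smul] :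
        ∀ y ∈ Bv j, y ∉ Bv i ∩ Bv j → v' y • y = 0)]
    rw [Finset.sum_congr rfl (fun y hy => by
        show (if y ∈ Bv i ∩ Bv j then v y else 0) • y = v y • y
        rw [if_pos hy])]
    exact hv2
  have huniq := unique_weights (hindep j) v' (fun y => c * (wa' y + us' y))
    (by
      rw [hv'1, ← Finset.mul_sum, Finset.sum_add_distrib, hwa'1, hus'1, hc]
      field_simp
      ring)
    (by
      rw [hv'2]
      have hWx : ∑ y ∈ Bv j, (wa' y + us' y) • y = x := by
        simp only [add_smul, Finset.sum_add_distrib, hwa'2, hus'2]; exact hx2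
      simp_rw [mul_smul]
      rw [← Finset.smul_sum, hWx])
  have hzero : ∀ y ∈ Bv j, y ∉ Bv i → wa' y = 0 := by
    intro y hyj hyi
    have h1 := huniq y hyj
    have h2 : v' y = 0 := if_neg (by simp [Finset.mem_inter, hyi])
    rw [h2] at h1
    have h3 : wa' y + us' y = 0 :=
      (mul_eq_zero.1 h1.symm).resolve_left hc0.ne'
    have := hwa'0 y hyj; have := hus'0 y hyj
    linarith
  have ha'mem : a' ∈ convexHull ℝ ((Bv i : Set (Fin d → ℝ))) := by
    apply convexHull_mono (show ((Bv i ∩ Bv j : Finset (Fin d → ℝ)) : Set (Fin d → ℝ))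
        ⊆ (Bv i : Set (Fin d → ℝ)) from Finset.coe_subset.2 Finset.inter_subset_left)
    rw [mem_convexHull_finset_iff]
    refine ⟨wa', fun y hy => hwa'0 y (Finset.inter_subset_right hy), ?_, ?_⟩
    · rw [Finset.sum_subset Finset.inter_subset_right
        (fun y hy hy' => hzero y hy (fun h => hy' (Finset.mem_inter.2 ⟨h, hy⟩)))]
      exact hwa'1
    · rw [Finset.sum_subset Finset.inter_subset_right
        (fun y hy hy' => by
          rw [hzero y hy (fun h => hy' (Finset.mem_inter.2 ⟨h, hy⟩)), zero_smul])]
      exact hwa'2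
  exact ((hAF j a').1 ha').2.2 i hij ha'mem

theorem decomposition_pieces_disjoint (d k n : ℕ) (hk : 0 < k)
    (A B : Finset (Fin d → ℝ))
    (hBspan : affineSpan ℝ (B : Set (Fin d → ℝ)) = ⊤)
    (hAB : (A : Set (Fin d → ℝ)) ⊆ convexHull ℝ (B : Set (Fin d → ℝ)))
    (Bv : Fin n → Finset (Fin d → ℝ))
    (hsub : ∀ i, Bv i ⊆ B)
    (hcard : ∀ i, (Bv i).card = d + 1)
    (hindep : ∀ i, AffineIndependent ℝ
      (fun p : ((Bv i : Set (Fin d → ℝ))) => (p : Fin d → ℝ)))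
    (hmeet : ∀ i, convexHull ℝ ((Bv i : Set (Fin d → ℝ))) ∩ (B : Set (Fin d → ℝ))
      = (Bv i : Set (Fin d → ℝ)))
    (hreg : ∀ i j, convexHull ℝ ((Bv i : Set (Fin d → ℝ)))
        ∩ convexHull ℝ ((Bv j : Set (Fin d → ℝ)))
      = convexHull ℝ ((Bv i ∩ Bv j : Finset (Fin d → ℝ)) : Set (Fin d → ℝ)))
    (hcover : convexHull ℝ (B : Set (Fin d → ℝ))
      = ⋃ i, convexHull ℝ ((Bv i : Set (Fin d → ℝ))))
    (AF : Fin n → Finset (Fin d → ℝ))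
    (hAF : ∀ i a, a ∈ AF i ↔ a ∈ A ∧ a ∈ convexHull ℝ ((Bv i : Set (Fin d → ℝ))) ∧
      ∀ j < i, a ∉ convexHull ℝ ((Bv j : Set (Fin d → ℝ)))) :
    (Set.univ : Set (Fin n)).Pairwise
      (fun i j => Disjoint (AF i + kfoldSumset k (Bv i)) (AF j + kfoldSumset k (Bv j))) ∧
    (A + kfoldSumset k B).card ≥ ∑ i, (AF i + kfoldSumset k (Bv i)).card := by
  classical
  have hdisj : ∀ {i j : Fin n}, i ≠ j →
      Disjoint (AF i + kfoldSumset k (Bv i)) (AF j + kfoldSumset k (Bv j)) := by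
    intro i j hne
    rcases hne.lt_or_gt with h | h
    · exact core_disjoint A Bv hindep hreg AF hAF h
    · exact (core_disjoint A Bv hindep hreg AF hAF h).symm
  refine ⟨fun i _ j _ hne => hdisj hne, ?_⟩
  have hsubset : ∀ i, AF i + kfoldSumset k (Bv i) ⊆ A + kfoldSumset k B := fun i =>
    Finset.add_subset_add (fun a ha => ((hAF i a).1 ha).1) (kfold_mono k (hsub i))
  calc ∑ i, (AF i + kfoldSumset k (Bv i)).card
      = (Finset.univ.biUnion fun i => AF i + kfoldSumset k (Bv i)).card :=
        (Finset.card_biUnion fun i _ j _ hne => hdisj hne).symm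
    _ ≤ (A + kfoldSumset k B).card :=
        Finset.card_le_card (Finset.biUnion_subset.2 fun i _ => hsubset i)
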